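/- Under the DCSBM population setup, the K×K matrix D̃P̃D̃ is nonsingular, and a nonzero real number μ is an eigenvalue of 𝓛_δ if and only if μ/‖θ̃‖² is an eigenvalue of D̃P̃D̃; consequently 𝓛_δ has exactly K nonzero eigenvalues (counted with multiplicity) and they are ‖θ̃‖² times the eigenvalues of D̃P̃D̃. -/

import Mathlib

open Matrix BigOperators MeasureTheory ProbabilityTheory

noncomputable section

namespace DCSBM

variable {n K : ℕ}

/-- The `n × K` membership matrix `Z` with `Z i k = 1` iff node `i` is in community `k`. -/
def Zmat (g : Fin n → Fin K) : Matrix (Fin n) (Fin K) ℝ :=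
  Matrix.of fun i k => if g i = k then (1 : ℝ) else 0

/-- The population expectation matrix `Ω = Θ Z P Zᵀ Θ`. -/
def Omega (g : Fin n → Fin K) (θ : Fin n → ℝ) (P : Matrix (Fin K) (Fin K) ℝ) :
    Matrix (Fin n) (Fin n) ℝ :=
  Matrix.diagonal θ * Zmat g * P * (Zmat g)ᵀ * Matrix.diagonal θ

/-- Expected degrees `𝒟_ii = ∑_j Ω_ij`. -/
def Dvec (g : Fin n → Fin K) (θ : Fin n → ℝ) (P : Matrix (Fin K) (Fin K) ℝ) : Fin n → ℝ :=
  fun i => ∑ j, Omega g θ P i j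

/-- The regularized population Laplacian `𝓛_δ = 𝒟_δ^{-1/2} Ω 𝒟_δ^{-1/2}`. -/
def Ldelta (g : Fin n → Fin K) (θ : Fin n → ℝ) (P : Matrix (Fin K) (Fin K) ℝ) (δ d : ℝ) :
    Matrix (Fin n) (Fin n) ℝ :=
  Matrix.diagonal (fun i => (Real.sqrt (Dvec g θ P i + δ * d))⁻¹) * Omega g θ P *
    Matrix.diagonal (fun i => (Real.sqrt (Dvec g θ P i + δ * d))⁻¹)

/-- `θ^δ_i = θ_i 𝒟_ii / (𝒟_ii + δ d)`. -/
def thetaDelta (g : Fin n → Fin K) (θ : Fin n → ℝ) (P : Matrix (Fin K) (Fin K) ℝ) (δ d : ℝ) :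
    Fin n → ℝ :=
  fun i => θ i * Dvec g θ P i / (Dvec g θ P i + δ * d)

/-- `θ̃_i = √(θ^δ_i)`. -/
def thetaTilde (g : Fin n → Fin K) (θ : Fin n → ℝ) (P : Matrix (Fin K) (Fin K) ℝ) (δ d : ℝ) :
    Fin n → ℝ :=
  fun i => Real.sqrt (thetaDelta g θ P δ d i)

/-- `θ̃^{(k)}_i = θ̃_i · 1{g i = k}`. -/
def thetaTildeK (g : Fin n → Fin K) (θ : Fin n → ℝ) (P : Matrix (Fin K) (Fin K) ℝ) (δ d : ℝ)
    (k : Fin K) : Fin n → ℝ :=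
  fun i => if g i = k then thetaTilde g θ P δ d i else 0

/-- Euclidean norm of a vector. -/
def normE {m : ℕ} (v : Fin m → ℝ) : ℝ := Real.sqrt (∑ i, v i ^ 2)

/-- Row sums of `Q = P Zᵀ Θ`, the diagonal entries of `D_P`. -/
def DPvec (g : Fin n → Fin K) (θ : Fin n → ℝ) (P : Matrix (Fin K) (Fin K) ℝ) : Fin K → ℝ :=
  fun k => ∑ j, (P * (Zmat g)ᵀ * Matrix.diagonal θ) k j

/-- `P̃ = D_P^{-1/2} P D_P^{-1/2}`. -/
def Ptilde (g : Fin n → Fin K) (θ : Fin n → ℝ) (P : Matrix (Fin K) (Fin K) ℝ) :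
    Matrix (Fin K) (Fin K) ℝ :=
  Matrix.diagonal (fun k => (Real.sqrt (DPvec g θ P k))⁻¹) * P *
    Matrix.diagonal (fun k => (Real.sqrt (DPvec g θ P k))⁻¹)

/-- `D̃ = diag(‖θ̃^{(k)}‖ / ‖θ̃‖)`. -/
def Dtilde (g : Fin n → Fin K) (θ : Fin n → ℝ) (P : Matrix (Fin K) (Fin K) ℝ) (δ d : ℝ) :
    Matrix (Fin K) (Fin K) ℝ :=
  Matrix.diagonal fun k => normE (thetaTildeK g θ P δ d k) / normE (thetaTilde g θ P δ d)

/-- `Γ̃`, the `n × K` matrix whose `k`-th column is `θ̃^{(k)} / ‖θ̃^{(k)}‖`. -/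
def Gamma (g : Fin n → Fin K) (θ : Fin n → ℝ) (P : Matrix (Fin K) (Fin K) ℝ) (δ d : ℝ) :
    Matrix (Fin n) (Fin K) ℝ :=
  Matrix.of fun i k => thetaTildeK g θ P δ d k i / normE (thetaTildeK g θ P δ d k)

lemma eval_charpoly' {m : ℕ} (M : Matrix (Fin m) (Fin m) ℝ) (x : ℝ) :
    M.charpoly.eval x = (x • (1 : Matrix (Fin m) (Fin m) ℝ) - M).det := by
  rw [Matrix.charpoly, ← Polynomial.coe_evalRingHom, RingHom.map_det]
  congr 1
  ext i j
  by_cases h : i = j <;>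
    simp [h, Matrix.charmatrix_apply, Matrix.one_apply, Matrix.diagonal_apply]

lemma charpoly_conj {n K : ℕ} (hKn : K ≤ n) (A : Matrix (Fin n) (Fin K) ℝ)
    (B : Matrix (Fin K) (Fin K) ℝ) (hA : Aᵀ * A = 1) :
    (A * B * Aᵀ).charpoly = Polynomial.X ^ (n - K) * B.charpoly := by
  apply Polynomial.eq_of_infinite_eval_eq
  apply Set.Infinite.mono (s := {x : ℝ | x ≠ 0})
  · intro x hx
    have hx : (x:ℝ) ≠ 0 := hx
    simp only [Set.mem_setOf_eq, Polynomial.eval_mul, Polynomial.eval_pow, Polynomial.eval_X,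
      eval_charpoly']
    have h1 : x • (1 : Matrix (Fin n) (Fin n) ℝ) - A * B * Aᵀ
        = x • ((1 : Matrix (Fin n) (Fin n) ℝ) - A * ((x⁻¹ • B) * Aᵀ)) := by
      rw [smul_sub]
      congr 1
      rw [Matrix.smul_mul, Matrix.mul_smul, smul_smul, mul_inv_cancel₀ hx, one_smul, Matrix.mul_assoc]
    have h2 : x • (1 : Matrix (Fin K) (Fin K) ℝ) - B
        = x • ((1 : Matrix (Fin K) (Fin K) ℝ) - x⁻¹ • B) := by
      rw [smul_sub, smul_smul, mul_inv_cancel₀ hx, one_smul]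
    rw [h1, h2, Matrix.det_smul, Matrix.det_smul]
    have h3 : (1 : Matrix (Fin n) (Fin n) ℝ) - A * ((x⁻¹ • B) * Aᵀ)
        = 1 + A * (-((x⁻¹ • B) * Aᵀ)) := by rw [Matrix.mul_neg]; ring_nf; rw [sub_eq_add_neg]
    rw [h3, Matrix.det_one_add_mul_comm, Matrix.neg_mul, Matrix.mul_assoc, hA, Matrix.mul_one,
      ← sub_eq_add_neg]
    simp only [Fintype.card_fin]
    rw [← mul_assoc, ← pow_add, Nat.sub_add_cancel hKn]
  · exact (Set.finite_singleton 0).infinite_compl.mono (by intro x hx; simpa using hx)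
section T2
variable {n K : ℕ}
lemma Omega_apply (g : Fin n → Fin K) (θ : Fin n → ℝ) (P : Matrix (Fin K) (Fin K) ℝ)
    (i j : Fin n) : Omega g θ P i j = θ i * θ j * P (g i) (g j) := by
  have : Omega g θ P i j = θ i * ((Zmat g * P * (Zmat g)ᵀ) i j) * θ j := by
    rw [Omega, Matrix.mul_diagonal]
    congr 1
    rw [show Matrix.diagonal θ * Zmat g * P * (Zmat g)ᵀ
        = Matrix.diagonal θ * (Zmat g * P * (Zmat g)ᵀ) by
      simp [Matrix.mul_assoc], Matrix.diagonal_mul]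
  rw [this]
  have h2 : (Zmat g * P * (Zmat g)ᵀ) i j = P (g i) (g j) := by
    rw [Matrix.mul_assoc]
    simp [Zmat, Matrix.mul_apply, ite_mul, mul_ite, Finset.sum_ite_eq, Finset.sum_ite_eq']
  rw [h2]; ring

lemma DPvec_apply (g : Fin n → Fin K) (θ : Fin n → ℝ) (P : Matrix (Fin K) (Fin K) ℝ)
    (k : Fin K) : DPvec g θ P k = ∑ j, P k (g j) * θ j := by
  unfold DPvec
  congr 1; ext j
  rw [Matrix.mul_diagonal]
  congr 1
  simp [Zmat, Matrix.mul_apply, ite_mul, mul_ite, Finset.sum_ite_eq, Finset.sum_ite_eq']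

lemma Dvec_eq (g : Fin n → Fin K) (θ : Fin n → ℝ) (P : Matrix (Fin K) (Fin K) ℝ)
    (i : Fin n) : Dvec g θ P i = θ i * DPvec g θ P (g i) := by
  simp only [Dvec, Omega_apply, DPvec_apply, Finset.mul_sum]
  congr 1; ext j; ring
end T2
section T3
variable {n K : ℕ} (g : Fin n → Fin K) (θ : Fin n → ℝ) (P : Matrix (Fin K) (Fin K) ℝ)

lemma DPvec_pos (hg : Function.Surjective g) (hθ : ∀ i, 0 < θ i)
    (hPdet : P.det ≠ 0) (hPnn : ∀ k l, 0 ≤ P k l) (k : Fin K) : 0 < DPvec g θ P k := by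
  have hrow : ∃ l, P k l ≠ 0 := by
    by_contra h
    push_neg at h
    exact hPdet (Matrix.det_eq_zero_of_row_eq_zero k (by simpa using h))
  obtain ⟨l, hl⟩ := hrow
  obtain ⟨j0, hj0⟩ := hg l
  rw [DPvec_apply]
  apply Finset.sum_pos'
  · exact fun j _ => mul_nonneg (hPnn _ _) (hθ j).le
  · exact ⟨j0, Finset.mem_univ _, by
      rw [hj0]; exact mul_pos (lt_of_le_of_ne (hPnn _ _) (Ne.symm hl)) (hθ j0)⟩

lemma Dvec_pos (hg : Function.Surjective g) (hθ : ∀ i, 0 < θ i)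
    (hPdet : P.det ≠ 0) (hPnn : ∀ k l, 0 ≤ P k l) (i : Fin n) : 0 < Dvec g θ P i := by
  rw [Dvec_eq]; exact mul_pos (hθ i) (DPvec_pos g θ P hg hθ hPdet hPnn (g i))

variable (δ d : ℝ)

lemma thetaTilde_eq (hg : Function.Surjective g) (hθ : ∀ i, 0 < θ i)
    (hPdet : P.det ≠ 0) (hPnn : ∀ k l, 0 ≤ P k l) (hδ : 0 < δ) (hd : 0 < d) (i : Fin n) :
    thetaTilde g θ P δ d i
      = θ i * Real.sqrt (DPvec g θ P (g i)) / Real.sqrt (Dvec g θ P i + δ * d) := by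
  have hden : 0 < Dvec g θ P i + δ * d :=
    add_pos (Dvec_pos g θ P hg hθ hPdet hPnn i) (mul_pos hδ hd)
  have hDP := (DPvec_pos g θ P hg hθ hPdet hPnn (g i)).le
  have hθi := (hθ i).le
  have hD := Dvec_eq g θ P i
  have h1 : thetaDelta g θ P δ d i = θ i ^ 2 * DPvec g θ P (g i) / (Dvec g θ P i + δ * d) := by
    rw [thetaDelta, hD]; ring
  rw [thetaTilde, h1, Real.sqrt_div (by positivity), Real.sqrt_mul (sq_nonneg _),
    Real.sqrt_sq hθi]

lemma thetaTilde_pos (hg : Function.Surjective g) (hθ : ∀ i, 0 < θ i)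
    (hPdet : P.det ≠ 0) (hPnn : ∀ k l, 0 ≤ P k l) (hδ : 0 < δ) (hd : 0 < d) (i : Fin n) :
    0 < thetaTilde g θ P δ d i := by
  rw [thetaTilde_eq g θ P δ d hg hθ hPdet hPnn hδ hd i]
  have h1 := DPvec_pos g θ P hg hθ hPdet hPnn (g i)
  have h2 : 0 < Dvec g θ P i + δ * d :=
    add_pos (Dvec_pos g θ P hg hθ hPdet hPnn i) (mul_pos hδ hd)
  have h3 := hθ i
  positivity

lemma normE_sq {m : ℕ} (v : Fin m → ℝ) : normE v ^ 2 = ∑ i, v i ^ 2 := by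
  rw [normE, Real.sq_sqrt (Finset.sum_nonneg fun i _ => sq_nonneg _)]

lemma normE_thetaTildeK_pos (hg : Function.Surjective g) (hθ : ∀ i, 0 < θ i)
    (hPdet : P.det ≠ 0) (hPnn : ∀ k l, 0 ≤ P k l) (hδ : 0 < δ) (hd : 0 < d) (k : Fin K) :
    0 < normE (thetaTildeK g θ P δ d k) := by
  obtain ⟨i0, hi0⟩ := hg k
  rw [normE]
  apply Real.sqrt_pos.mpr
  apply Finset.sum_pos'
  · exact fun i _ => sq_nonneg _
  · refine ⟨i0, Finset.mem_univ _, ?_⟩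
    rw [thetaTildeK]
    simp only [hi0, if_true]
    exact pow_pos (thetaTilde_pos g θ P δ d hg hθ hPdet hPnn hδ hd i0) 2

lemma normE_thetaTilde_pos (hg : Function.Surjective g) (hθ : ∀ i, 0 < θ i)
    (hPdet : P.det ≠ 0) (hPnn : ∀ k l, 0 ≤ P k l) (hδ : 0 < δ) (hd : 0 < d) (hK : 1 ≤ K)
    (hKn : K ≤ n) :
    0 < normE (thetaTilde g θ P δ d) := by
  have hn : 0 < n := lt_of_lt_of_le hK hKn
  rw [normE]
  apply Real.sqrt_pos.mpr
  apply Finset.sum_pos'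
  · exact fun i _ => sq_nonneg _
  · exact ⟨⟨0, hn⟩, Finset.mem_univ _,
      pow_pos (thetaTilde_pos g θ P δ d hg hθ hPdet hPnn hδ hd _) 2⟩
end T3
section T4
variable {n K : ℕ} (g : Fin n → Fin K) (θ : Fin n → ℝ) (P : Matrix (Fin K) (Fin K) ℝ)
  (δ d : ℝ)

lemma GtG (hg : Function.Surjective g) (hθ : ∀ i, 0 < θ i)
    (hPdet : P.det ≠ 0) (hPnn : ∀ k l, 0 ≤ P k l) (hδ : 0 < δ) (hd : 0 < d) :
    (Gamma g θ P δ d)ᵀ * Gamma g θ P δ d = 1 := by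
  ext k l
  rw [Matrix.mul_apply]
  by_cases hkl : k = l
  · subst hkl
    have hnk := normE_thetaTildeK_pos g θ P δ d hg hθ hPdet hPnn hδ hd k
    have : ∀ i, (Gamma g θ P δ d)ᵀ k i * Gamma g θ P δ d i k
        = thetaTildeK g θ P δ d k i ^ 2 / normE (thetaTildeK g θ P δ d k) ^ 2 := by
      intro i
      simp [Gamma, Matrix.transpose_apply]
      ring
    rw [Finset.sum_congr rfl fun i _ => this i, ← Finset.sum_div, ← normE_sq,
      div_self (by positivity), Matrix.one_apply_eq]
  · have : ∀ i, (Gamma g θ P δ d)ᵀ k i * Gamma g θ P δ d i l = 0 := by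
      intro i
      simp only [Gamma, Matrix.transpose_apply, Matrix.of_apply, thetaTildeK]
      by_cases h1 : g i = k
      · have h2 : ¬ g i = l := fun h2 => hkl (h1.symm.trans h2)
        rw [if_neg h2]; simp
      · rw [if_neg h1]; simp
    rw [Finset.sum_congr rfl fun i _ => this i, Finset.sum_const, smul_zero,
      Matrix.one_apply_ne hkl]

set_option maxHeartbeats 1000000 in
lemma L_eq (hg : Function.Surjective g) (hθ : ∀ i, 0 < θ i)
    (hPdet : P.det ≠ 0) (hPnn : ∀ k l, 0 ≤ P k l) (hδ : 0 < δ) (hd : 0 < d)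
    (hK : 1 ≤ K) (hKn : K ≤ n) :
    Ldelta g θ P δ d = Gamma g θ P δ d *
      ((normE (thetaTilde g θ P δ d)) ^ 2 • (Dtilde g θ P δ d * Ptilde g θ P * Dtilde g θ P δ d)) *
      (Gamma g θ P δ d)ᵀ := by
  have hnt := normE_thetaTilde_pos g θ P δ d hg hθ hPdet hPnn hδ hd hK hKn
  have hnk := fun k => normE_thetaTildeK_pos g θ P δ d hg hθ hPdet hPnn hδ hd k
  have hDP := fun k => DPvec_pos g θ P hg hθ hPdet hPnn k
  have hden : ∀ i, 0 < Dvec g θ P i + δ * d := fun i =>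
    add_pos (Dvec_pos g θ P hg hθ hPdet hPnn i) (mul_pos hδ hd)
  -- the middle matrix entries
  set s := normE (thetaTilde g θ P δ d) with hs
  have hmid : ∀ k l, (s ^ 2 • (Dtilde g θ P δ d * Ptilde g θ P * Dtilde g θ P δ d)) k l
      = normE (thetaTildeK g θ P δ d k) * normE (thetaTildeK g θ P δ d l) *
        ((Real.sqrt (DPvec g θ P k))⁻¹ * P k l * (Real.sqrt (DPvec g θ P l))⁻¹) := by
    intro k l
    rw [Matrix.smul_apply]
    have : (Dtilde g θ P δ d * Ptilde g θ P * Dtilde g θ P δ d) k l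
        = (normE (thetaTildeK g θ P δ d k) / s) * Ptilde g θ P k l *
          (normE (thetaTildeK g θ P δ d l) / s) := by
      rw [Dtilde, Matrix.mul_diagonal, Matrix.diagonal_mul]
    rw [this, Ptilde, Matrix.mul_diagonal, Matrix.diagonal_mul]
    have hs0 : s ≠ 0 := ne_of_gt hnt
    have hss : s ^ 2 * s⁻¹ ^ 2 = 1 := by rw [← mul_pow, mul_inv_cancel₀ hs0, one_pow]
    field_simp [hs0]
    linear_combination (normE (thetaTildeK g θ P δ d k) * P k l * normE (thetaTildeK g θ P δ d l) *
      (Real.sqrt (DPvec g θ P k))⁻¹ * (Real.sqrt (DPvec g θ P l))⁻¹) * hss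
  ext i j
  rw [Matrix.mul_apply]
  have hterm : ∀ k, (Gamma g θ P δ d *
      (s ^ 2 • (Dtilde g θ P δ d * Ptilde g θ P * Dtilde g θ P δ d))) i k *
      (Gamma g θ P δ d)ᵀ k j
      = (if g j = k then
          (thetaTilde g θ P δ d i * thetaTilde g θ P δ d j *
            ((Real.sqrt (DPvec g θ P (g i)))⁻¹ * P (g i) k * (Real.sqrt (DPvec g θ P k))⁻¹))
        else 0) := by
    intro k
    rw [Matrix.mul_apply]
    have hin : ∀ m, Gamma g θ P δ d i m *
        (s ^ 2 • (Dtilde g θ P δ d * Ptilde g θ P * Dtilde g θ P δ d)) m k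
        = (if g i = m then thetaTilde g θ P δ d i * (normE (thetaTildeK g θ P δ d k) *
            ((Real.sqrt (DPvec g θ P m))⁻¹ * P m k * (Real.sqrt (DPvec g θ P k))⁻¹)) else 0) := by
      intro m
      rw [hmid]
      simp only [Gamma, Matrix.of_apply, thetaTildeK]
      by_cases h1 : g i = m
      · rw [if_pos h1, if_pos h1]
        have hmm : normE (thetaTildeK g θ P δ d m) * (normE (thetaTildeK g θ P δ d m))⁻¹ = 1 :=
          mul_inv_cancel₀ (hnk m).ne'
        field_simp [(hnk m).ne']
      · rw [if_neg h1, if_neg h1]; simp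
    rw [Finset.sum_congr rfl fun m _ => hin m, Finset.sum_ite_eq Finset.univ (g i),
      if_pos (Finset.mem_univ _)]
    simp only [Matrix.transpose_apply, Gamma, Matrix.of_apply, thetaTildeK]
    by_cases h2 : g j = k
    · rw [if_pos h2, if_pos h2]
      have hkk : normE (thetaTildeK g θ P δ d k) * (normE (thetaTildeK g θ P δ d k))⁻¹ = 1 :=
        mul_inv_cancel₀ (hnk k).ne'
      field_simp [(hnk k).ne']
    · rw [if_neg h2, if_neg h2]; simp
  rw [Finset.sum_congr rfl fun k _ => hterm k, Finset.sum_ite_eq Finset.univ (g j),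
    if_pos (Finset.mem_univ _)]
  -- Now the explicit formula; compare with Ldelta entry
  rw [Ldelta, Matrix.mul_diagonal, Matrix.diagonal_mul, Omega_apply]
  rw [thetaTilde_eq g θ P δ d hg hθ hPdet hPnn hδ hd i,
    thetaTilde_eq g θ P δ d hg hθ hPdet hPnn hδ hd j]
  have h1 : Real.sqrt (DPvec g θ P (g i)) ≠ 0 := (Real.sqrt_pos.mpr (hDP _)).ne'
  have h2 : Real.sqrt (DPvec g θ P (g j)) ≠ 0 := (Real.sqrt_pos.mpr (hDP _)).ne'
  have h3 : Real.sqrt (Dvec g θ P i + δ * d) ≠ 0 := (Real.sqrt_pos.mpr (hden _)).ne'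
  have h4 : Real.sqrt (Dvec g θ P j + δ * d) ≠ 0 := (Real.sqrt_pos.mpr (hden _)).ne'
  field_simp
end T4
/-- `D̃P̃D̃` is nonsingular; a nonzero `μ` is an eigenvalue of `𝓛_δ` iff `μ/‖θ̃‖²` is an
eigenvalue of `D̃P̃D̃`; and `𝓛_δ` has exactly `K` nonzero eigenvalues counted with
multiplicity, namely `‖θ̃‖²` times the eigenvalues of `D̃P̃D̃` (expressed via the
characteristic polynomial). -/
theorem stmt5 {n K : ℕ} (hK : 1 ≤ K) (hKn : K ≤ n)
    (g : Fin n → Fin K) (hg : Function.Surjective g)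
    (θ : Fin n → ℝ) (hθ : ∀ i, 0 < θ i)
    (P : Matrix (Fin K) (Fin K) ℝ) (hPsymm : P.IsSymm) (hPdet : P.det ≠ 0)
    (hPnn : ∀ k l, 0 ≤ P k l)
    (δ d : ℝ) (hδ : 0 < δ) (hd : 0 < d) :
    (Dtilde g θ P δ d * Ptilde g θ P * Dtilde g θ P δ d).det ≠ 0 ∧
      (∀ μ : ℝ, μ ≠ 0 →
        ((∃ v : Fin n → ℝ, v ≠ 0 ∧ Ldelta g θ P δ d *ᵥ v = μ • v) ↔
          (∃ w : Fin K → ℝ, w ≠ 0 ∧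
            (Dtilde g θ P δ d * Ptilde g θ P * Dtilde g θ P δ d) *ᵥ w =
              (μ / (normE (thetaTilde g θ P δ d)) ^ 2) • w))) ∧
      (Ldelta g θ P δ d).charpoly =
        Polynomial.X ^ (n - K) *
          ((normE (thetaTilde g θ P δ d)) ^ 2 •
            (Dtilde g θ P δ d * Ptilde g θ P * Dtilde g θ P δ d)).charpoly := by
  have hnt := normE_thetaTilde_pos g θ P δ d hg hθ hPdet hPnn hδ hd hK hKn
  have hnk := fun k => normE_thetaTildeK_pos g θ P δ d hg hθ hPdet hPnn hδ hd k
  have hDP := fun k => DPvec_pos g θ P hg hθ hPdet hPnn k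
  have hL := L_eq g θ P δ d hg hθ hPdet hPnn hδ hd hK hKn
  have hG := GtG g θ P δ d hg hθ hPdet hPnn hδ hd
  set s := normE (thetaTilde g θ P δ d) ^ 2 with hs_def
  have hs : s ≠ 0 := by positivity
  set M := Dtilde g θ P δ d * Ptilde g θ P * Dtilde g θ P δ d with hM
  set Γ := Gamma g θ P δ d with hΓ
  have key : ∀ u : Fin n → ℝ, Ldelta g θ P δ d *ᵥ u = Γ *ᵥ ((s • M) *ᵥ (Γᵀ *ᵥ u)) :=
    fun u => by rw [Matrix.mulVec_mulVec, Matrix.mulVec_mulVec, hL]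
  have key2 : ∀ u : Fin K → ℝ, Γᵀ *ᵥ (Γ *ᵥ u) = u :=
    fun u => by rw [Matrix.mulVec_mulVec, hG, Matrix.one_mulVec]
  refine ⟨?_, ?_, ?_⟩
  · -- determinant
    rw [hM, Matrix.det_mul, Matrix.det_mul, Ptilde, Matrix.det_mul, Matrix.det_mul,
      Dtilde, Matrix.det_diagonal, Matrix.det_diagonal]
    have h1 : ∏ k, normE (thetaTildeK g θ P δ d k) / normE (thetaTilde g θ P δ d) ≠ 0 :=
      Finset.prod_ne_zero_iff.mpr fun k _ => by have := hnk k; positivity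
    have h2 : ∏ k : Fin K, (Real.sqrt (DPvec g θ P k))⁻¹ ≠ 0 :=
      Finset.prod_ne_zero_iff.mpr fun k _ => by have := hDP k; positivity
    exact mul_ne_zero (mul_ne_zero h1 (mul_ne_zero (mul_ne_zero h2 hPdet) h2)) h1
  · -- eigenvalues
    intro μ hμ
    constructor
    · rintro ⟨v, hv, hveq⟩
      refine ⟨Γᵀ *ᵥ v, ?_, ?_⟩
      · intro hw
        apply smul_ne_zero hμ hv
        rw [← hveq, key, hw, Matrix.mulVec_zero, Matrix.mulVec_zero]
      · have hsM : (s • M) *ᵥ (Γᵀ *ᵥ v) = μ • (Γᵀ *ᵥ v) := by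
          rw [← key2 ((s • M) *ᵥ (Γᵀ *ᵥ v)), ← key v, hveq, Matrix.mulVec_smul]
        rw [Matrix.smul_mulVec] at hsM
        calc M *ᵥ (Γᵀ *ᵥ v) = s⁻¹ • (s • (M *ᵥ (Γᵀ *ᵥ v))) := by
              rw [smul_smul, inv_mul_cancel₀ hs, one_smul]
          _ = s⁻¹ • (μ • (Γᵀ *ᵥ v)) := by rw [hsM]
          _ = (μ / s) • (Γᵀ *ᵥ v) := by rw [smul_smul, inv_mul_eq_div]
    · rintro ⟨w, hw, hweq⟩
      refine ⟨Γ *ᵥ w, ?_, ?_⟩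
      · intro hv
        apply hw
        rw [← key2 w, hv, Matrix.mulVec_zero]
      · rw [key, key2, Matrix.smul_mulVec, hweq, smul_smul,
          mul_div_cancel₀ μ hs, ← Matrix.mulVec_smul]
  · -- charpoly
    rw [hL]
    exact charpoly_conj hKn Γ (s • M) hG
end DCSBM
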